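/- Let Y be a module over the degenerate affine Hecke-Clifford algebra H(d), and suppose v ∈ Y satisfies x_i·v = √(q(a))·v and x_{i+1}·v = √(q(b))·v for integers a, b, where q(a) = a(a+1). If q(a) ≠ q(b+1) and q(a) ≠ q(b-1), then φ_i²·v ≠ 0, where φ_i is the intertwiner s_i(x_i² - x_{i+1}²) + (x_i + x_{i+1}) - c_i c_{i+1}(x_i - x_{i+1}). -/

import Mathlib

/-- A (degenerate) affine Hecke-Clifford algebra structure on a `ℂ`-algebra `A`. -/
structure AHCA (d : ℕ) (A : Type*) [Ring A] [Algebra ℂ A] where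
  c : ℕ → A
  s : ℕ → A
  x : ℕ → A
  c_sq : ∀ i, i < d → c i * c i = -1
  c_anticomm : ∀ i j, i < d → j < d → i ≠ j → c i * c j = -(c j * c i)
  s_sq : ∀ i, i + 1 < d → s i * s i = 1
  braid : ∀ i, i + 2 < d → s i * s (i + 1) * s i = s (i + 1) * s i * s (i + 1)
  s_comm : ∀ i j, i + 1 < d → j + 1 < d → i + 1 < j → s i * s j = s j * s i
  s_c_left : ∀ i, i + 1 < d → s i * c i = c (i + 1) * s i
  s_c_right : ∀ i, i + 1 < d → s i * c (i + 1) = c i * s i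
  s_c_other : ∀ i j, i + 1 < d → j < d → j ≠ i → j ≠ i + 1 → s i * c j = c j * s i
  x_comm : ∀ i j, i < d → j < d → x i * x j = x j * x i
  c_x_same : ∀ i, i < d → c i * x i = -(x i * c i)
  c_x_other : ∀ i j, i < d → j < d → i ≠ j → c i * x j = x j * c i
  s_x_same : ∀ i, i + 1 < d → s i * x i = x (i + 1) * s i - 1 + c i * c (i + 1)
  s_x_other : ∀ i j, i + 1 < d → j < d → j ≠ i → j ≠ i + 1 → s i * x j = x j * s i

/-- The intertwiner `φ_i`. -/
def AHCA.phi {d : ℕ} {A : Type*} [Ring A] [Algebra ℂ A] (H : AHCA d A) (i : ℕ) : A :=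
  H.s i * (H.x i ^ 2 - H.x (i + 1) ^ 2) + (H.x i + H.x (i + 1))
    - H.c i * H.c (i + 1) * (H.x i - H.x (i + 1))

theorem phi_sq_formula {d : ℕ} {A : Type*} [Ring A] [Algebra ℂ A] (H : AHCA d A)
    (i : ℕ) (hi : i + 1 < d) :
    H.phi i * H.phi i =
      (H.x i * H.x i + H.x i * H.x i) + (H.x (i+1) * H.x (i+1) + H.x (i+1) * H.x (i+1))
        - (H.x i * H.x i - H.x (i+1) * H.x (i+1)) * (H.x i * H.x i - H.x (i+1) * H.x (i+1)) := by
  have hii : i < d := by omega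
  have hi1 : i + 1 < d := hi
  set s := H.s i with hs
  set X := H.x i with hX
  set Yv := H.x (i+1) with hYv
  set c := H.c i * H.c (i+1) with hc
  have YX : Yv * X = X * Yv := H.x_comm (i+1) i hi1 hii
  have ss : s * s = 1 := H.s_sq i hi
  have sX : s * X = Yv * s - 1 + c := H.s_x_same i hi
  have cc : c * c = -1 := by
    calc H.c i * H.c (i+1) * (H.c i * H.c (i+1))
        = H.c i * (H.c (i+1) * H.c i) * H.c (i+1) := by noncomm_ring
      _ = H.c i * (-(H.c i * H.c (i+1))) * H.c (i+1) := by
            rw [H.c_anticomm (i+1) i hi1 hii (Nat.succ_ne_self i)]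
      _ = -((H.c i * H.c i) * (H.c (i+1) * H.c (i+1))) := by noncomm_ring
      _ = -1 := by rw [H.c_sq i hii, H.c_sq (i+1) hi1]; noncomm_ring
  have sc : s * c = -(c * s) := by
    calc s * (H.c i * H.c (i+1)) = (s * H.c i) * H.c (i+1) := by noncomm_ring
      _ = (H.c (i+1) * s) * H.c (i+1) := by rw [H.s_c_left i hi]
      _ = H.c (i+1) * (s * H.c (i+1)) := by noncomm_ring
      _ = H.c (i+1) * (H.c i * s) := by rw [H.s_c_right i hi]
      _ = (H.c (i+1) * H.c i) * s := by noncomm_ring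
      _ = (-(H.c i * H.c (i+1))) * s := by
            rw [H.c_anticomm (i+1) i hi1 hii (Nat.succ_ne_self i)]
      _ = -((H.c i * H.c (i+1)) * s) := by noncomm_ring
  have cX : c * X = -(X * c) := by
    calc H.c i * H.c (i+1) * X = H.c i * (H.c (i+1) * X) := by noncomm_ring
      _ = H.c i * (X * H.c (i+1)) := by
            rw [H.c_x_other (i+1) i hi1 hii (Nat.succ_ne_self i)]
      _ = (H.c i * X) * H.c (i+1) := by noncomm_ring
      _ = (-(X * H.c i)) * H.c (i+1) := by rw [H.c_x_same i hii]
      _ = -(X * (H.c i * H.c (i+1))) := by noncomm_ring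
  have cY : c * Yv = -(Yv * c) := by
    calc H.c i * H.c (i+1) * Yv = H.c i * (H.c (i+1) * Yv) := by noncomm_ring
      _ = H.c i * (-(Yv * H.c (i+1))) := by rw [H.c_x_same (i+1) hi1]
      _ = -((H.c i * Yv) * H.c (i+1)) := by noncomm_ring
      _ = -((Yv * H.c i) * H.c (i+1)) := by
            rw [H.c_x_other i (i+1) hii hi1 (Nat.ne_of_lt (Nat.lt_succ_self i))]
      _ = -(Yv * (H.c i * H.c (i+1))) := by noncomm_ring
  have sY : s * Yv = X * s + 1 + c := by
    have cancel : ∀ u w : A, s * u = s * w → u = w := by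
      intro u w h
      have h2 : s * (s * u) = s * (s * w) := by rw [h]
      rwa [← mul_assoc, ← mul_assoc, ss, one_mul, one_mul] at h2
    apply cancel
    have hL : s * (s * Yv) = Yv := by rw [← mul_assoc, ss, one_mul]
    rw [hL, mul_add, mul_add, mul_one, sc, ← mul_assoc, sX, add_mul, sub_mul,
      one_mul, mul_assoc, ss, mul_one]
    abel
  have phi_def : H.phi i = s * (X * X - Yv * Yv) + (X + Yv) - c * (X - Yv) := by
    rw [AHCA.phi, pow_two, pow_two]
  have sX' : ∀ t, s * (X * t) = (Yv * s - 1 + c) * t := fun t => by rw [← mul_assoc, sX]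
  have sY' : ∀ t, s * (Yv * t) = (X * s + 1 + c) * t := fun t => by rw [← mul_assoc, sY]
  have sc' : ∀ t, s * (c * t) = -(c * (s * t)) := fun t => by
    rw [← mul_assoc, sc, neg_mul, mul_assoc]
  have cX' : ∀ t, c * (X * t) = -(X * (c * t)) := fun t => by
    rw [← mul_assoc, cX, neg_mul, mul_assoc]
  have cY' : ∀ t, c * (Yv * t) = -(Yv * (c * t)) := fun t => by
    rw [← mul_assoc, cY, neg_mul, mul_assoc]
  have cc' : ∀ t, c * (c * t) = -t := fun t => by rw [← mul_assoc, cc, neg_one_mul]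
  have ss' : ∀ t, s * (s * t) = t := fun t => by rw [← mul_assoc, ss, one_mul]
  have YX' : ∀ t, Yv * (X * t) = X * (Yv * t) := fun t => by
    rw [← mul_assoc, YX, mul_assoc]
  rw [phi_def]
  simp only [mul_add, add_mul, mul_sub, sub_mul, mul_neg, neg_mul, mul_one, one_mul,
    neg_neg, mul_assoc, sX, sX', sY, sY', sc, sc', cX, cX', cY, cY', cc, cc', ss, ss',
    YX, YX']
  noncomm_ring

/-- `q a = a (a + 1)`. -/
def qval (a : ℤ) : ℤ := a * (a + 1)

/-- The (complex) square root `√(q a)` of `q a = a(a+1) ≥ 0`. -/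
noncomputable def sqrtq (a : ℤ) : ℂ := ((Real.sqrt ((qval a : ℤ) : ℝ) : ℝ) : ℂ)

lemma qval_nonneg (a : ℤ) : 0 ≤ qval a := by
  unfold qval
  rcases le_or_gt 0 a with h | h
  · exact mul_nonneg h (by linarith)
  · nlinarith

lemma sqrtq_mul_self (a : ℤ) : sqrtq a * sqrtq a = ((qval a : ℤ) : ℂ) := by
  unfold sqrtq
  rw [← Complex.ofReal_mul,
    Real.mul_self_sqrt (by exact_mod_cast qval_nonneg a)]
  push_cast
  ring

/-- If `Y` is an `H_{Cl}^{aff}(d)`-module and `v ∈ Y` is a nonzero vector with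
`x_i v = √(q a) v` and `x_{i+1} v = √(q b) v` for integers `a, b`, and
`q a ≠ q (b+1)` and `q a ≠ q (b-1)`, then `φ_i² v ≠ 0`. -/
theorem phi_sq_ne_zero {d : ℕ} {A : Type*} [Ring A] [Algebra ℂ A] (H : AHCA d A)
    {Y : Type*} [AddCommGroup Y] [Module ℂ Y] [Module A Y]
    [IsScalarTower ℂ A Y] [SMulCommClass A ℂ Y]
    (i : ℕ) (hi : i + 1 < d) (a b : ℤ) (v : Y) (hv : v ≠ 0)
    (hxa : H.x i • v = sqrtq a • v) (hxb : H.x (i + 1) • v = sqrtq b • v)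
    (h1 : qval a ≠ qval (b + 1)) (h2 : qval a ≠ qval (b - 1)) :
    (H.phi i * H.phi i) • v ≠ 0 := by
  have formula := phi_sq_formula H i hi
  set qa : ℂ := ((qval a : ℤ) : ℂ) with hqa
  set qb : ℂ := ((qval b : ℤ) : ℂ) with hqb
  have hX2 : (H.x i * H.x i) • v = qa • v := by
    rw [mul_smul, hxa, smul_comm, hxa, smul_smul, sqrtq_mul_self]
  have hY2 : (H.x (i+1) * H.x (i+1)) • v = qb • v := by
    rw [mul_smul, hxb, smul_comm, hxb, smul_smul, sqrtq_mul_self]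
  have hsub : (H.x i * H.x i - H.x (i+1) * H.x (i+1)) • v = (qa - qb) • v := by
    rw [sub_smul, hX2, hY2, ← sub_smul]
  have hfull : (H.phi i * H.phi i) • v
      = ((qa + qa) + (qb + qb) - (qa - qb) * (qa - qb)) • v := by
    rw [formula, sub_smul, add_smul, add_smul, add_smul, hX2, hY2, mul_smul, hsub,
      smul_comm, hsub, smul_smul]
    module
  rw [hfull]
  have key : (qa + qa) + (qb + qb) - (qa - qb) * (qa - qb)
      = -(((qval a - qval (b+1) : ℤ) : ℂ) * ((qval a - qval (b-1) : ℤ) : ℂ)) := by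
    rw [hqa, hqb]
    have hz : (qval a + qval a) + (qval b + qval b) - (qval a - qval b) * (qval a - qval b)
        = -((qval a - qval (b+1)) * (qval a - qval (b-1))) := by
      unfold qval; ring
    exact_mod_cast hz
  rw [key]
  apply smul_ne_zero _ hv
  simp only [neg_ne_zero]
  apply mul_ne_zero <;>
  · rw [Int.cast_ne_zero, sub_ne_zero]
    assumption
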